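/- Let k ≥ 2 be an integer and let θ be a real number with 0 < θ < 2√(k−1). Let t₁ ≥ 4 be the integer with λ^{(t₁−3)} < θ ≤ λ^{(t₁−2)} and set c₁ = −F_{t₁−2}(θ)/G_{t₁−4}(θ); let t₂ ≥ 3 be the integer with r^{(t₂−2)} < θ ≤ r^{(t₂−1)} and set c₂ = −F_{t₂−1}(θ)/𝒢_{t₂−2}(θ). Then M(k,t₁,c₁) ≤ N(k,t₂,c₂), and equality holds only if t₁ = t₂, θ = λ^{(t₁−2)}, c₁ = 1 and c₂ = k. -/

import Mathlib

open Polynomial Matrix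

/-- The orthogonal polynomials `F_i` defined by `F_0 = 1`, `F_1 = x`, `F_2 = x^2 - k`,
and `F_i = x F_{i-1} - (k-1) F_{i-2}` for `i ≥ 3`. -/
noncomputable def Fpoly (k : ℝ) : ℕ → Polynomial ℝ
  | 0 => 1
  | 1 => X
  | 2 => X ^ 2 - C k
  | (n + 3) => X * Fpoly k (n + 2) - C (k - 1) * Fpoly k (n + 1)

/-- `G_i = ∑_{j=0}^{⌊i/2⌋} F_{i-2j}`. -/
noncomputable def Gpoly (k : ℝ) (i : ℕ) : Polynomial ℝ :=
  ∑ j ∈ Finset.range (i / 2 + 1), Fpoly k (i - 2 * j)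

/-- `M(k,t,c) = 2 (∑_{i=0}^{t-4} (k-1)^i + (k-1)^{t-3}/c + (k-1)^{t-2}/c)`. -/
noncomputable def Mbound (k t : ℕ) (c : ℝ) : ℝ :=
  2 * ((∑ i ∈ Finset.range (t - 3), ((k : ℝ) - 1) ^ i) +
    ((k : ℝ) - 1) ^ (t - 3) / c + ((k : ℝ) - 1) ^ (t - 2) / c)

/-- `𝒢_j = ∑_{i=0}^{j} F_i`. -/
noncomputable def calG (k : ℝ) (j : ℕ) : Polynomial ℝ :=
  ∑ i ∈ Finset.range (j + 1), Fpoly k i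

/-- `N(k,t,c) = 1 + ∑_{i=0}^{t-3} k(k-1)^i + k(k-1)^{t-2}/c`. -/
noncomputable def Nbound (k t : ℕ) (c : ℝ) : ℝ :=
  1 + (∑ i ∈ Finset.range (t - 2), (k : ℝ) * ((k : ℝ) - 1) ^ i) +
    (k : ℝ) * ((k : ℝ) - 1) ^ (t - 2) / c


lemma Fpoly_rec (k : ℝ) (i : ℕ) :
    Fpoly k (i + 3) = X * Fpoly k (i + 2) - C (k - 1) * Fpoly k (i + 1) := rfl

lemma Gpoly_zero (k : ℝ) : Gpoly k 0 = 1 := by simp [Gpoly, Fpoly]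
lemma Gpoly_one (k : ℝ) : Gpoly k 1 = X := by simp [Gpoly, Fpoly]

lemma Gpoly_step (k : ℝ) (i : ℕ) : Gpoly k (i + 2) = Fpoly k (i + 2) + Gpoly k i := by
  unfold Gpoly
  have h2 : (i + 2) / 2 + 1 = (i / 2 + 1) + 1 := by omega
  rw [h2, Finset.sum_range_succ']
  have h3 : ∀ j ∈ Finset.range (i / 2 + 1),
      Fpoly k (i + 2 - 2 * (j + 1)) = Fpoly k (i - 2 * j) := by
    intro j hj; congr 1; omega
  rw [Finset.sum_congr rfl h3]
  have : i + 2 - 2 * 0 = i + 2 := by omega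
  rw [this, add_comm]

lemma Gpoly_rec (k : ℝ) (i : ℕ) :
    Gpoly k (i + 2) = X * Gpoly k (i + 1) - C (k - 1) * Gpoly k i := by
  induction i using Nat.twoStepInduction with
  | zero =>
    rw [Gpoly_step, Gpoly_zero, Gpoly_one]
    show X ^ 2 - C k + 1 = _
    rw [map_sub, _root_.map_one]
    ring
  | one =>
    rw [Gpoly_step, Gpoly_one]
    show X * (X ^ 2 - C k) - C (k - 1) * X + X = X * Gpoly k 2 - C (k - 1) * X
    rw [show (2 : ℕ) = 0 + 2 from rfl, Gpoly_step, Gpoly_zero]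
    show _ = X * (X ^ 2 - C k + 1) - C (k - 1) * X
    ring
  | more i ih _ =>
    have e1 : Gpoly k (i + 2 + 2) = Fpoly k (i + 4) + Gpoly k (i + 2) := Gpoly_step k (i + 2)
    have e2 : Gpoly k (i + 2 + 1) = Fpoly k (i + 3) + Gpoly k (i + 1) := Gpoly_step k (i + 1)
    have fr1 : Fpoly k (i + 4) = X * Fpoly k (i + 3) - C (k-1) * Fpoly k (i + 2) :=
      Fpoly_rec k (i + 1)
    have e0 := Gpoly_step k i
    linear_combination e1 + fr1 - X * e2 + ih + C (k-1) * e0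

lemma calG_succ (k : ℝ) (i : ℕ) : calG k (i + 1) = calG k i + Fpoly k (i + 1) :=
  Finset.sum_range_succ _ _

lemma calG_zero (k : ℝ) : calG k 0 = 1 := by simp [calG, Fpoly]

lemma calG_rec (k : ℝ) (i : ℕ) :
    calG k (i + 2) = X * calG k (i + 1) - C (k - 1) * calG k i := by
  induction i with
  | zero =>
    rw [show (2:ℕ) = 1 + 1 from rfl, calG_succ, calG_succ, calG_zero]
    show 1 + X + (X ^ 2 - C k) = X * (1 + X) - C (k - 1) * 1
    rw [map_sub, _root_.map_one]
    ring
  | succ i ih =>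
    have e3 := calG_succ k (i + 2)
    have e2 := calG_succ k (i + 1)
    have e1 := calG_succ k i
    have fr := Fpoly_rec k i
    show calG k (i + 2 + 1) = _
    linear_combination e3 + ih + fr - X * e2 + C (k-1) * e1

lemma Fpoly_eq_G_sub_G (k : ℝ) (i : ℕ) : Fpoly k (i + 2) = Gpoly k (i + 2) - Gpoly k i := by
  rw [Gpoly_step]; ring

lemma calG_eq_G_add_G (k : ℝ) (i : ℕ) : calG k (i + 1) = Gpoly k (i + 1) + Gpoly k i := by
  induction i using Nat.twoStepInduction with
  | zero => rw [calG_succ, calG_zero, Gpoly_one, Gpoly_zero]; show 1 + X = X + 1; ring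
  | one =>
    rw [show (1:ℕ)+1 = 0+2 from rfl, calG_rec, calG_succ, calG_zero, Gpoly_step,
      Gpoly_zero, Gpoly_one]
    show X * (1 + X) - C (k-1) * 1 = X^2 - C k + 1 + X
    rw [map_sub, _root_.map_one]; ring
  | more i ih1 ih2 =>
    have cr := calG_rec k (i + 1)
    have gr2 := Gpoly_rec k (i + 1)
    have gr1 := Gpoly_rec k i
    show calG k (i + 1 + 2) = _
    linear_combination cr + X * ih2 - C (k-1) * ih1 - gr2 - gr1

lemma geval_rec (k x : ℝ) (i : ℕ) : (Gpoly k (i+2)).eval x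
    = x * (Gpoly k (i+1)).eval x - (k-1) * (Gpoly k i).eval x := by
  rw [Gpoly_rec]; simp

lemma caleval_rec (k x : ℝ) (i : ℕ) : (calG k (i+2)).eval x
    = x * (calG k (i+1)).eval x - (k-1) * (calG k i).eval x := by
  rw [calG_rec]; simp

lemma sin_closed (k Q φ : ℝ) (hQ : Q^2 = k - 1) :
    ∀ i : ℕ, Real.sin φ * (Gpoly k i).eval (2*Q*Real.cos φ)
      = Q^i * Real.sin (((i:ℝ)+1) * φ) := by
  intro i
  induction i using Nat.twoStepInduction with
  | zero => rw [Gpoly_zero]; norm_num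
  | one =>
    rw [Gpoly_one]; push_cast
    rw [eval_X, show ((1:ℝ)+1)*φ = 2*φ by ring, Real.sin_two_mul]
    ring
  | more i ih1 ih2 =>
    push_cast at ih1 ih2 ⊢
    have key : Real.sin (((i:ℝ)+2+1)*φ)
        = 2*Real.cos φ * Real.sin (((i:ℝ)+1+1)*φ) - Real.sin (((i:ℝ)+1)*φ) := by
      rw [show ((i:ℝ)+2+1)*φ = ((i:ℝ)+1+1)*φ + φ by ring,
        show ((i:ℝ)+1)*φ = ((i:ℝ)+1+1)*φ - φ by ring, Real.sin_add, Real.sin_sub]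
      ring
    rw [geval_rec]
    linear_combination (2*Q*Real.cos φ) * ih2 - (k-1) * ih1 - Q^(i+2)*key
      + Q^i*Real.sin (((i:ℝ)+1)*φ)*hQ

lemma sin_closed_cal (k Q φ : ℝ) (hQ : Q^2 = k - 1) (i : ℕ) :
    Real.sin φ * (calG k (i+1)).eval (2*Q*Real.cos φ)
      = Q^i * (Q * Real.sin (((i:ℝ)+2) * φ) + Real.sin (((i:ℝ)+1) * φ)) := by
  have h1 := sin_closed k Q φ hQ (i+1)
  have h0 := sin_closed k Q φ hQ i
  push_cast at h1 h0
  rw [calG_eq_G_add_G, eval_add, mul_add]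
  rw [show ((i:ℝ)+2)*φ = ((i:ℝ)+1+1)*φ by ring]
  linear_combination h1 + h0

lemma geval_big (k Q x : ℝ) (hQ : Q^2 = k - 1) (hQ0 : 0 < Q) (hx : 2*Q ≤ x) :
    ∀ i : ℕ, 0 < (Gpoly k i).eval x ∧
      Q * (Gpoly k i).eval x ≤ (Gpoly k (i+1)).eval x := by
  intro i
  induction i with
  | zero =>
    rw [Gpoly_zero, Gpoly_one]
    refine ⟨by norm_num, ?_⟩
    rw [eval_one, eval_X]
    nlinarith
  | succ i ih =>
    obtain ⟨h0, h1⟩ := ih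
    have hp : 0 < (Gpoly k (i+1)).eval x := lt_of_lt_of_le (by positivity) h1
    refine ⟨hp, ?_⟩
    rw [geval_rec]
    nlinarith

lemma caleval_big (k Q x : ℝ) (hQ : Q^2 = k - 1) (hQ0 : 0 < Q) (hx : 2*Q ≤ x) :
    ∀ i : ℕ, 0 < (calG k i).eval x ∧
      Q * (calG k i).eval x ≤ (calG k (i+1)).eval x := by
  intro i
  induction i with
  | zero =>
    rw [calG_zero, show (1:ℕ) = 0 + 1 from rfl, calG_succ, calG_zero]
    constructor
    · norm_num
    · show Q * _ ≤ (1 + Fpoly k 1).eval x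
      show _ ≤ (1 + X).eval x
      simp only [eval_one, eval_add, eval_X]
      nlinarith
  | succ i ih =>
    obtain ⟨h0, h1⟩ := ih
    have hp : 0 < (calG k (i+1)).eval x := lt_of_lt_of_le (by positivity) h1
    refine ⟨hp, ?_⟩
    rw [caleval_rec]
    nlinarith

lemma root_lt_big (p : Polynomial ℝ) (b r : ℝ) (hbig : ∀ x, b ≤ x → 0 < p.eval x)
    (hr : p.eval r = 0) : r < b := by
  by_contra hh
  push_neg at hh
  exact absurd hr (ne_of_gt (hbig r hh))

lemma pos_of_gt_greatest (p : Polynomial ℝ) (b lam y : ℝ)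
    (hbig : ∀ x, b ≤ x → 0 < p.eval x)
    (hg : IsGreatest {x : ℝ | p.eval x = 0} lam) (hy : lam < y) : 0 < p.eval y := by
  by_contra h
  push_neg at h
  have hyb : y < b := by
    by_contra hh
    push_neg at hh
    exact absurd (hbig y hh) (not_lt.mpr h)
  rcases eq_or_lt_of_le h with he | hlt
  · exact absurd (hg.2 he) (not_le.mpr hy)
  · have hcont : ContinuousOn (fun x => p.eval x) (Set.Icc y b) :=
      p.continuous.continuousOn
    have h0 : (0:ℝ) ∈ Set.Ioo (p.eval y) (p.eval b) := ⟨hlt, hbig b le_rfl⟩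
    obtain ⟨z, hz, hz0⟩ := intermediate_value_Ioo (le_of_lt hyb) hcont h0
    have : z ≤ lam := hg.2 hz0
    linarith [hz.1]



lemma my_arccos_le_arccos {x y : ℝ} (h : x ≤ y) : Real.arccos y ≤ Real.arccos x := by
  unfold Real.arccos
  have := Real.monotone_arcsin h
  linarith

lemma my_arccos_lt_arccos {x y : ℝ} (hx : -1 ≤ x) (hxy : x < y) (hy : y ≤ 1) :
    Real.arccos y < Real.arccos x :=
  Real.strictAntiOn_arccos ⟨hx, le_trans (le_of_lt hxy) hy⟩
    ⟨le_trans hx (le_of_lt hxy), hy⟩ hxy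

lemma mulpi_lt {a b : ℝ} (hb : 0 < b) (h : a < b) : a * (Real.pi/b) < Real.pi := by
  have hp := Real.pi_pos
  rw [mul_div_assoc']
  rw [div_lt_iff₀ hb]
  nlinarith

lemma mulpi_le {a b : ℝ} (hb : 0 < b) (h : a ≤ b) : a * (Real.pi/b) ≤ Real.pi := by
  have hp := Real.pi_pos
  rw [mul_div_assoc']
  rw [div_le_iff₀ hb]
  nlinarith

lemma lepi_mul {a b : ℝ} (hb : 0 < b) (h : b ≤ a) : Real.pi ≤ a * (Real.pi/b) := by
  have hp := Real.pi_pos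
  rw [mul_div_assoc']
  rw [le_div_iff₀ hb]
  nlinarith

lemma ltpi_mul {a b : ℝ} (hb : 0 < b) (h : b < a) : Real.pi < a * (Real.pi/b) := by
  have hp := Real.pi_pos
  rw [mul_div_assoc']
  rw [lt_div_iff₀ hb]
  nlinarith

lemma sum_idA (K : ℝ) (m : ℕ) :
    1 + (∑ i ∈ Finset.range (m+2), K*(K-1)^i) - 2*(∑ i ∈ Finset.range (m+1), (K-1)^i)
      = (K-1)^(m+1)*(K+1) := by
  induction m with
  | zero => simp [Finset.sum_range_succ]; ring
  | succ m ih =>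
    rw [Finset.sum_range_succ (f := fun i => K*(K-1)^i),
      Finset.sum_range_succ (f := fun i => (K-1)^i)]
    linear_combination ih

lemma sum_idB (K : ℝ) (m : ℕ) :
    1 + (∑ i ∈ Finset.range (m+1), K*(K-1)^i) - 2*(∑ i ∈ Finset.range (m+1), (K-1)^i)
      = (K-1)^(m+1) := by
  induction m with
  | zero => simp [Finset.sum_range_succ]; ring
  | succ m ih =>
    rw [Finset.sum_range_succ (f := fun i => K*(K-1)^i),
      Finset.sum_range_succ (f := fun i => (K-1)^i)]
    linear_combination ih

lemma keyA (Q c s2 s3 s1 s4 θ K : ℝ) (hK : K = Q^2 + 1) (h1 : s1 = 2*c*s2 - s3)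
    (h4 : s4 = 2*c*s3 - s2) (hθ : θ = 2*Q*c) :
    (K+1)*((s1 - (K-1)*s3)*(s2 - (K-1)*s4)) - 2*K*s1*(s2-(K-1)*s4)
      + K*(K-1)*((s1-(K-1)*s3)*(Q*s3+s2))
    = (-s3)*(K-1)*(K-θ)*(K*(Q*s3+s2) + (K+θ)*s2) := by
  subst hK h1 h4 hθ; ring

lemma keyB (Q c s2 s3 s1 θ K : ℝ) (hK : K = Q^2 + 1) (h1 : s1 = 2*c*s2 - s3)
    (hθ : θ = 2*Q*c) :
    (s1 - (K-1)*s3) + K*(Q*s2 - s1) = Q*s2*(K - θ) := by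
  subst hK h1 hθ; ring

lemma MboundEq (k : ℕ) (m : ℕ) (c : ℝ) :
    Mbound k (m+4) c = 2 * ((∑ i ∈ Finset.range (m+1), ((k : ℝ) - 1) ^ i) +
      ((k : ℝ) - 1) ^ (m+1) / c + ((k : ℝ) - 1) ^ (m+2) / c) := by
  unfold Mbound
  congr 2 <;> omega

lemma NboundEq (k : ℕ) (m : ℕ) (c : ℝ) :
    Nbound k (m+2) c = 1 + (∑ i ∈ Finset.range m, (k : ℝ) * ((k : ℝ) - 1) ^ i) +
      (k : ℝ) * ((k : ℝ) - 1) ^ m / c := by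
  unfold Nbound
  congr 2 <;> omega

lemma greatest_root_G (k Q : ℝ) (hQ : Q^2 = k - 1) (hQ0 : 0 < Q) (j : ℕ) (hj : 1 ≤ j)
    (lam : ℝ) (hg : IsGreatest {x : ℝ | (Gpoly k j).eval x = 0} lam) :
    lam = 2*Q*Real.cos (Real.pi/((j:ℝ)+1)) := by
  have hπ := Real.pi_pos
  have hj1 : (0:ℝ) < (j:ℝ) + 1 := by positivity
  have hj2 : (2:ℝ) ≤ (j:ℝ) + 1 := by
    have : (1:ℝ) ≤ (j:ℝ) := by exact_mod_cast hj
    linarith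
  set ψ : ℝ := Real.pi/((j:ℝ)+1) with hψdef
  have hψ0 : 0 < ψ := by positivity
  have hψhalf : ψ ≤ Real.pi/2 := by
    rw [hψdef, div_le_div_iff₀ hj1 (by norm_num)]
    nlinarith
  have hψpi : ψ < Real.pi := by
    rw [hψdef, div_lt_iff₀ hj1]
    nlinarith
  -- L is a root
  have hLroot : (Gpoly k j).eval (2*Q*Real.cos ψ) = 0 := by
    have hcl := sin_closed k Q ψ hQ j
    have hsψ : 0 < Real.sin ψ := Real.sin_pos_of_pos_of_lt_pi hψ0 hψpi
    have hval : (((j:ℝ))+1) * ψ = Real.pi := by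
      rw [hψdef]; field_simp
    rw [hval, Real.sin_pi, mul_zero] at hcl
    rcases mul_eq_zero.mp hcl with h | h
    · exact absurd h (ne_of_gt hsψ)
    · exact h
  have hLle : 2*Q*Real.cos ψ ≤ lam := hg.2 hLroot
  -- lam < 2Q
  have hbig : ∀ x, 2*Q ≤ x → 0 < (Gpoly k j).eval x :=
    fun x hx => (geval_big k Q x hQ hQ0 hx j).1
  have hlam2Q : lam < 2*Q := root_lt_big _ _ _ hbig hg.1
  -- lam ≥ L ≥ 0
  have hcosψ : 0 ≤ Real.cos ψ := Real.cos_nonneg_of_mem_Icc ⟨by linarith, hψhalf⟩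
  have hlam0 : 0 ≤ lam := le_trans (by positivity) hLle
  -- χ := arccos (lam/(2Q))
  set χ : ℝ := Real.arccos (lam/(2*Q)) with hχdef
  have hl1 : lam/(2*Q) ≤ 1 := by
    rw [div_le_one (by positivity)]; linarith
  have hl0 : 0 ≤ lam/(2*Q) := by positivity
  have hcosχ : Real.cos χ = lam/(2*Q) := Real.cos_arccos (by linarith) hl1
  have hχlam : 2*Q*Real.cos χ = lam := by
    rw [hcosχ]; field_simp
  have hχ0 : 0 < χ := Real.arccos_pos.mpr (by
    rw [div_lt_one (by positivity)]; linarith)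
  have hχpi : χ < Real.pi := by
    have := Real.arccos_le_pi_div_two.mpr hl0
    rw [← hχdef] at this
    linarith
  have hsχ : 0 < Real.sin χ := Real.sin_pos_of_pos_of_lt_pi hχ0 hχpi
  -- χ ≤ ψ
  have hχψ : χ ≤ ψ := by
    have h1 : Real.cos ψ ≤ lam/(2*Q) := by
      rw [le_div_iff₀ (by positivity)]; linarith [hLle]
    calc χ ≤ Real.arccos (Real.cos ψ) := my_arccos_le_arccos h1
    _ = ψ := Real.arccos_cos (le_of_lt hψ0) (le_of_lt hψpi)
  -- root equation forces (j+1)χ = π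
  have hrootχ : Real.sin ((((j:ℝ))+1) * χ) = 0 := by
    have hcl := sin_closed k Q χ hQ j
    rw [hχlam] at hcl
    rw [hg.1, mul_zero] at hcl
    have hQj : (0:ℝ) < Q^j := by positivity
    nlinarith [hcl]
  have hjχpi : (((j:ℝ))+1) * χ = Real.pi := by
    by_contra hne
    have hlt : (((j:ℝ))+1) * χ < Real.pi := by
      have : (((j:ℝ))+1) * χ ≤ (((j:ℝ))+1) * ψ := by
        apply mul_le_mul_of_nonneg_left hχψ (by positivity)
      have hψπ : (((j:ℝ))+1) * ψ = Real.pi := by rw [hψdef]; field_simp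
      rcases lt_or_eq_of_le this with h | h
      · rw [hψπ] at h; exact h
      · exact absurd (h.trans hψπ) hne
    have := Real.sin_pos_of_pos_of_lt_pi (by positivity) hlt
    exact absurd hrootχ (ne_of_gt this)
  have : χ = ψ := by
    rw [hψdef]
    field_simp
    linarith [hjχpi]
  rw [← hχlam, this]


lemma helper_pos {a b c : ℝ} (ha : 0 < a) (h : a * b = c) (hc : 0 < c) : 0 < b := by
  nlinarith
lemma helper_np {a b c : ℝ} (ha : 0 < a) (h : a * b = c) (hc : c ≤ 0) : b ≤ 0 := by
  nlinarith
lemma helper_neg {a b c : ℝ} (ha : 0 < a) (h : a * b = c) (hc : c < 0) : b < 0 := by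
  nlinarith
lemma helper_nonneg {a b c : ℝ} (ha : 0 < a) (h : a * b = c) (hc : 0 ≤ c) : 0 ≤ b := by
  nlinarith

lemma pidiv_le_pi {b : ℝ} (hb : 1 ≤ b) : Real.pi/b ≤ Real.pi := by
  rw [div_le_iff₀ (by linarith)]; nlinarith [Real.pi_pos]
lemma pidiv_mono {a b : ℝ} (ha : 0 < a) (hab : a ≤ b) : Real.pi/b ≤ Real.pi/a := by
  apply div_le_div_of_nonneg_left Real.pi_pos.le ha hab
lemma pidiv_strict {a b : ℝ} (ha : 0 < a) (hab : a < b) : Real.pi/b < Real.pi/a :=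
  div_lt_div_of_pos_left Real.pi_pos ha hab
lemma pidiv_lt_rev {a b : ℝ} (ha : 0 < a) (hb : 0 < b)
    (h : Real.pi/b < Real.pi/a) : a < b := by
  have := (div_lt_div_iff₀ hb ha).mp h
  nlinarith [Real.pi_pos]
lemma mulpi_le2 {a b : ℝ} (hb : 0 < b) (h : a ≤ 2*b) : a * (Real.pi/b) ≤ 2*Real.pi := by
  rw [mul_div_assoc', div_le_iff₀ hb]; nlinarith [Real.pi_pos]


set_option maxHeartbeats 2000000

/-- Theorem 4.11: the bipartite bound `M(k,t₁,c₁)` is at most the general bound `N(k,t₂,c₂)`,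
with equality only if `t₁ = t₂`, `θ = λ^{(t₁-2)}`, `c₁ = 1` and `c₂ = k`. -/
theorem stmt14 (k t₁ t₂ : ℕ) (hk : 2 ≤ k) (θ : ℝ) (hθ0 : 0 < θ)
    (hθ : θ < 2 * Real.sqrt ((k : ℝ) - 1))
    (ht₁ : 4 ≤ t₁) (ht₂ : 3 ≤ t₂) (lamA lamB rA rB c₁ c₂ : ℝ)
    (hlamA : IsGreatest {x : ℝ | (Gpoly (k : ℝ) (t₁ - 3)).eval x = 0} lamA)
    (hlamB : IsGreatest {x : ℝ | (Gpoly (k : ℝ) (t₁ - 2)).eval x = 0} lamB)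
    (hrA : IsGreatest {x : ℝ | (calG (k : ℝ) (t₂ - 2)).eval x = 0} rA)
    (hrB : IsGreatest {x : ℝ | (calG (k : ℝ) (t₂ - 1)).eval x = 0} rB)
    (h1 : lamA < θ) (h2 : θ ≤ lamB) (h3 : rA < θ) (h4 : θ ≤ rB)
    (hc₁ : c₁ = -(Fpoly (k : ℝ) (t₁ - 2)).eval θ / (Gpoly (k : ℝ) (t₁ - 4)).eval θ)
    (hc₂ : c₂ = -(Fpoly (k : ℝ) (t₂ - 1)).eval θ / (calG (k : ℝ) (t₂ - 2)).eval θ) :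
    Mbound k t₁ c₁ ≤ Nbound k t₂ c₂ ∧
      (Mbound k t₁ c₁ = Nbound k t₂ c₂ →
        t₁ = t₂ ∧ θ = lamB ∧ c₁ = 1 ∧ c₂ = (k : ℝ)) := by
  have hπ := Real.pi_pos
  have hK2 : (2:ℝ) ≤ (k:ℝ) := by exact_mod_cast hk
  set K : ℝ := (k:ℝ) with hKdef
  set Q : ℝ := Real.sqrt (K - 1) with hQdef
  have hQ : Q^2 = K - 1 := Real.sq_sqrt (by linarith)
  have hQnn : 0 ≤ Q := Real.sqrt_nonneg _
  have hQ1 : 1 ≤ Q := by nlinarith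
  have hQ0 : 0 < Q := by linarith
  have hθ2Q : θ < 2*Q := hθ
  have hKθ : θ < K := by nlinarith
  obtain ⟨m, rfl⟩ : ∃ m, t₁ = m + 4 := ⟨t₁ - 4, by omega⟩
  rw [show m + 4 - 3 = m + 1 by omega] at hlamA
  rw [show m + 4 - 2 = m + 2 by omega] at hlamB hc₁
  rw [show m + 4 - 4 = m by omega] at hc₁
  have hcm2 : (0:ℝ) < (m:ℝ)+2 := by positivity
  have hcm3 : (0:ℝ) < (m:ℝ)+3 := by positivity
  -- the angle φ
  set φ : ℝ := Real.arccos (θ/(2*Q)) with hφdef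
  have hθdiv1 : θ/(2*Q) < 1 := by rw [div_lt_one (by positivity)]; linarith
  have hθdiv0 : 0 < θ/(2*Q) := by positivity
  have hcosφ : Real.cos φ = θ/(2*Q) := Real.cos_arccos (by linarith) (le_of_lt hθdiv1)
  have hθeq : θ = 2*Q*Real.cos φ := by rw [hcosφ]; field_simp
  have hφ0 : 0 < φ := Real.arccos_pos.mpr hθdiv1
  have hφhalf : φ < Real.pi/2 := Real.arccos_lt_pi_div_two.mpr hθdiv0
  have hφpi : φ < Real.pi := by linarith
  have hsφ : 0 < Real.sin φ := Real.sin_pos_of_pos_of_lt_pi hφ0 hφpi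
  -- identify lamA and lamB
  have hlamAeq : lamA = 2*Q*Real.cos (Real.pi/((m:ℝ)+2)) := by
    have h := greatest_root_G K Q hQ hQ0 (m+1) (by omega) lamA hlamA
    push_cast at h
    convert h using 4 <;> ring
  have hlamBeq : lamB = 2*Q*Real.cos (Real.pi/((m:ℝ)+3)) := by
    have h := greatest_root_G K Q hQ hQ0 (m+2) (by omega) lamB hlamB
    push_cast at h
    convert h using 4 <;> ring
  -- window for φ
  have hφlow : Real.pi/((m:ℝ)+3) ≤ φ := by
    have ha1 : Real.pi/((m:ℝ)+3) ≤ Real.pi := pidiv_le_pi (by linarith)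
    have h2' : θ/(2*Q) ≤ Real.cos (Real.pi/((m:ℝ)+3)) := by
      rw [div_le_iff₀ (by positivity : (0:ℝ) < 2*Q)]
      rw [hlamBeq] at h2; linarith
    calc Real.pi/((m:ℝ)+3) = Real.arccos (Real.cos (Real.pi/((m:ℝ)+3))) :=
          (Real.arccos_cos (by positivity) ha1).symm
    _ ≤ φ := my_arccos_le_arccos h2'
  have hφhigh : φ < Real.pi/((m:ℝ)+2) := by
    have ha1 : Real.pi/((m:ℝ)+2) ≤ Real.pi := pidiv_le_pi (by linarith)
    have h1' : Real.cos (Real.pi/((m:ℝ)+2)) < θ/(2*Q) := by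
      rw [lt_div_iff₀ (by positivity : (0:ℝ) < 2*Q)]
      rw [hlamAeq] at h1; linarith
    calc φ < Real.arccos (Real.cos (Real.pi/((m:ℝ)+2))) :=
          my_arccos_lt_arccos (Real.neg_one_le_cos _) h1' (le_of_lt hθdiv1)
    _ = Real.pi/((m:ℝ)+2) := Real.arccos_cos (by positivity) ha1
  -- sine values
  set s1 : ℝ := Real.sin (((m:ℝ)+1)*φ) with hs1def
  set s2 : ℝ := Real.sin (((m:ℝ)+2)*φ) with hs2def
  set s3 : ℝ := Real.sin (((m:ℝ)+3)*φ) with hs3def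
  set s4 : ℝ := Real.sin (((m:ℝ)+4)*φ) with hs4def
  have hs1 : 0 < s1 := by
    apply Real.sin_pos_of_pos_of_lt_pi (mul_pos (by positivity) hφ0)
    calc ((m:ℝ)+1)*φ < ((m:ℝ)+1)*(Real.pi/((m:ℝ)+2)) := by
          apply mul_lt_mul_of_pos_left hφhigh (by positivity)
    _ < Real.pi := mulpi_lt hcm2 (by linarith)
  have hs2 : 0 < s2 := by
    apply Real.sin_pos_of_pos_of_lt_pi (mul_pos (by positivity) hφ0)
    calc ((m:ℝ)+2)*φ < ((m:ℝ)+2)*(Real.pi/((m:ℝ)+2)) := by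
          apply mul_lt_mul_of_pos_left hφhigh (by positivity)
    _ ≤ Real.pi := mulpi_le hcm2 le_rfl
  have h3low : Real.pi ≤ ((m:ℝ)+3)*φ := by
    calc Real.pi ≤ ((m:ℝ)+3)*(Real.pi/((m:ℝ)+3)) := lepi_mul hcm3 le_rfl
    _ ≤ ((m:ℝ)+3)*φ := mul_le_mul_of_nonneg_left hφlow (by positivity)
  have h3high : ((m:ℝ)+3)*φ < 2*Real.pi := by
    calc ((m:ℝ)+3)*φ < ((m:ℝ)+3)*(Real.pi/((m:ℝ)+2)) := by
          apply mul_lt_mul_of_pos_left hφhigh (by positivity)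
    _ ≤ 2*Real.pi := mulpi_le2 hcm2 (by linarith)
  have hs3 : s3 ≤ 0 := by
    have h := Real.sin_nonneg_of_nonneg_of_le_pi (x := ((m:ℝ)+3)*φ - Real.pi)
      (by linarith) (by linarith)
    rw [Real.sin_sub_pi] at h
    rw [hs3def]; linarith
  have hs3eq : s3 = 0 → φ = Real.pi/((m:ℝ)+3) := by
    intro h0
    have hne : ((m:ℝ)+3)*φ = Real.pi := by
      by_contra hne
      have hlt : Real.pi < ((m:ℝ)+3)*φ := lt_of_le_of_ne h3low (Ne.symm hne)
      have h := Real.sin_pos_of_pos_of_lt_pi (x := ((m:ℝ)+3)*φ - Real.pi)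
        (by linarith) (by linarith)
      rw [Real.sin_sub_pi] at h
      rw [hs3def] at h0
      linarith
    field_simp
    linarith
  have hs4 : s4 < 0 := by
    have h4low : Real.pi < ((m:ℝ)+4)*φ := by
      calc Real.pi < ((m:ℝ)+4)*(Real.pi/((m:ℝ)+3)) := ltpi_mul hcm3 (by linarith)
      _ ≤ ((m:ℝ)+4)*φ := mul_le_mul_of_nonneg_left hφlow (by positivity)
    have h4high : ((m:ℝ)+4)*φ < 2*Real.pi := by
      calc ((m:ℝ)+4)*φ < ((m:ℝ)+4)*(Real.pi/((m:ℝ)+2)) := by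
            apply mul_lt_mul_of_pos_left hφhigh (by positivity)
      _ ≤ 2*Real.pi := mulpi_le2 hcm2 (by linarith)
    have h := Real.sin_pos_of_pos_of_lt_pi (x := ((m:ℝ)+4)*φ - Real.pi)
      (by linarith) (by linarith)
    rw [Real.sin_sub_pi] at h
    rw [hs4def]; linarith
  -- angle-addition relations
  have hrel1 : s1 = 2*Real.cos φ*s2 - s3 := by
    rw [hs1def, hs2def, hs3def, show ((m:ℝ)+1)*φ = ((m:ℝ)+2)*φ - φ by ring,
      show ((m:ℝ)+3)*φ = ((m:ℝ)+2)*φ + φ by ring, Real.sin_sub, Real.sin_add]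
    ring
  have hrel4 : s4 = 2*Real.cos φ*s3 - s2 := by
    rw [hs2def, hs3def, hs4def, show ((m:ℝ)+4)*φ = ((m:ℝ)+3)*φ + φ by ring,
      show ((m:ℝ)+2)*φ = ((m:ℝ)+3)*φ - φ by ring, Real.sin_sub, Real.sin_add]
    ring
  -- closed forms for G at θ
  have hgm : Real.sin φ * (Gpoly K m).eval θ = Q^m * s1 := by
    rw [hθeq]; exact sin_closed K Q φ hQ m
  have hg1 : Real.sin φ * (Gpoly K (m+1)).eval θ = Q^(m+1) * s2 := by
    rw [hθeq]; have := sin_closed K Q φ hQ (m+1); push_cast at this ⊢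
    convert this using 3; ring
  have hg2 : Real.sin φ * (Gpoly K (m+2)).eval θ = Q^(m+2) * s3 := by
    rw [hθeq]; have := sin_closed K Q φ hQ (m+2); push_cast at this ⊢
    convert this using 3; ring
  have hg3 : Real.sin φ * (Gpoly K (m+3)).eval θ = Q^(m+3) * s4 := by
    rw [hθeq]; have := sin_closed K Q φ hQ (m+3); push_cast at this ⊢
    convert this using 3; ring
  have hQm : (0:ℝ) < Q^m := pow_pos hQ0 m
  have hQm1 : (0:ℝ) < Q^(m+1) := pow_pos hQ0 (m+1)
  have hQm2 : (0:ℝ) < Q^(m+2) := pow_pos hQ0 (m+2)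
  have hQm3 : (0:ℝ) < Q^(m+3) := pow_pos hQ0 (m+3)
  have hgmpos : 0 < (Gpoly K m).eval θ := helper_pos hsφ hgm (mul_pos hQm hs1)
  have hg1pos : 0 < (Gpoly K (m+1)).eval θ := helper_pos hsφ hg1 (mul_pos hQm1 hs2)
  have hg2np : (Gpoly K (m+2)).eval θ ≤ 0 := by
    refine helper_np hsφ hg2 ?_
    exact mul_nonpos_of_nonneg_of_nonpos (le_of_lt hQm2) hs3
  have hg3neg : (Gpoly K (m+3)).eval θ < 0 := by
    refine helper_neg hsφ hg3 ?_
    exact mul_neg_of_pos_of_neg hQm3 hs4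
  -- determine t₂
  obtain ⟨p, rfl⟩ : ∃ p, t₂ = p + 3 := ⟨t₂ - 3, by omega⟩
  rw [show p + 3 - 1 = p + 2 by omega] at hrB hc₂
  rw [show p + 3 - 2 = p + 1 by omega] at hrA hc₂
  have hbigcalB : ∀ x, 2*Q ≤ x → 0 < (calG K (p+2)).eval x :=
    fun x hx => (caleval_big K Q x hQ hQ0 hx (p+2)).1
  have hbigcalA : ∀ x, 2*Q ≤ x → 0 < (calG K (p+1)).eval x :=
    fun x hx => (caleval_big K Q x hQ hQ0 hx (p+1)).1
  -- lower bound : m ≤ p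
  have hpm : m ≤ p := by
    have hrB0 : 0 < rB := lt_of_lt_of_le hθ0 h4
    have hrB2Q : rB < 2*Q := root_lt_big _ _ _ hbigcalB hrB.1
    set χ : ℝ := Real.arccos (rB/(2*Q)) with hχdef
    have hd1 : rB/(2*Q) < 1 := by rw [div_lt_one (by positivity)]; linarith
    have hd0 : 0 < rB/(2*Q) := by positivity
    have hcosχ : Real.cos χ = rB/(2*Q) := Real.cos_arccos (by linarith) (le_of_lt hd1)
    have hχeq : rB = 2*Q*Real.cos χ := by rw [hcosχ]; field_simp
    have hχ0 : 0 < χ := Real.arccos_pos.mpr hd1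
    have hχhalf : χ < Real.pi/2 := Real.arccos_lt_pi_div_two.mpr hd0
    have hsχ : 0 < Real.sin χ := Real.sin_pos_of_pos_of_lt_pi hχ0 (by linarith)
    have hχφ : χ ≤ φ := by
      have hdd : θ/(2*Q) ≤ rB/(2*Q) := by
        apply div_le_div_of_nonneg_right ?_ ?_
        · exact h4
        · positivity
      exact my_arccos_le_arccos hdd
    have hcl := sin_closed_cal K Q χ hQ (p+1)
    rw [← hχeq, hrB.1, mul_zero] at hcl
    push_cast at hcl
    have hQp : (0:ℝ) < Q^(p+1) := pow_pos hQ0 (p+1)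
    have hzero : Q * Real.sin (((p:ℝ)+3)*χ) + Real.sin (((p:ℝ)+2)*χ) = 0 := by
      have h' := hcl.symm
      rcases mul_eq_zero.mp h' with h | h
      · exact absurd h (ne_of_gt hQp)
      · rw [show ((p:ℝ)+1+2) = ((p:ℝ)+3) by ring, show ((p:ℝ)+1+1) = ((p:ℝ)+2) by ring] at h
        exact h
    have hkey : Real.pi < ((p:ℝ)+3)*χ := by
      by_contra hle
      push_neg at hle
      have hp2pos : (0:ℝ) < ((p:ℝ)+2)*χ := mul_pos (by positivity) hχ0
      have hp2lt : ((p:ℝ)+2)*χ < Real.pi := by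
        have he : ((p:ℝ)+2)*χ = ((p:ℝ)+3)*χ - χ := by ring
        rw [he]; linarith
      have hA := Real.sin_nonneg_of_nonneg_of_le_pi
        (x := ((p:ℝ)+3)*χ) (le_of_lt (mul_pos (by positivity) hχ0)) hle
      have hB := Real.sin_pos_of_pos_of_lt_pi hp2pos hp2lt
      have hC := mul_nonneg (le_of_lt hQ0) hA
      linarith
    have hchain : Real.pi < ((p:ℝ)+3)*(Real.pi/((m:ℝ)+2)) := by
      calc Real.pi < ((p:ℝ)+3)*χ := hkey
      _ ≤ ((p:ℝ)+3)*φ := mul_le_mul_of_nonneg_left hχφ (by positivity)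
      _ < ((p:ℝ)+3)*(Real.pi/((m:ℝ)+2)) := by
          apply mul_lt_mul_of_pos_left hφhigh (by positivity)
    by_contra hmp
    push_neg at hmp
    have : ((p:ℝ)+3) ≤ ((m:ℝ)+2) := by
      have : (p:ℝ)+1 ≤ (m:ℝ) := by exact_mod_cast hmp
      linarith
    have := mulpi_le hcm2 this
    linarith
  -- upper bound : p ≤ m + 1
  have hpm2 : p ≤ m + 1 := by
    rcases Nat.eq_zero_or_pos p with hp0 | hp1
    · omega
    · have hcp1 : (0:ℝ) < (p:ℝ)+1 := by positivity
      have hcp2 : (0:ℝ) < (p:ℝ)+2 := by positivity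
      have hcp12 : (2:ℝ) ≤ (p:ℝ)+1 := by
        have : (1:ℝ) ≤ (p:ℝ) := by exact_mod_cast hp1
        linarith
      set ψ0 : ℝ := Real.pi/((p:ℝ)+1) with hψ0def
      set ψ1 : ℝ := Real.pi/((p:ℝ)+2) with hψ1def
      have hψ00 : 0 < ψ0 := by positivity
      have hψ0half : ψ0 ≤ Real.pi/2 := by
        rw [hψ0def]; exact pidiv_mono (by norm_num) hcp12
      have hψ0pi : ψ0 < Real.pi := by linarith
      have hψ10 : 0 < ψ1 := by positivity
      have hψ1ltψ0 : ψ1 < ψ0 := by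
        rw [hψ0def, hψ1def]; exact pidiv_strict hcp1 (by linarith)
      have hsψ0 : 0 < Real.sin ψ0 := Real.sin_pos_of_pos_of_lt_pi hψ00 hψ0pi
      have hsψ1 : 0 < Real.sin ψ1 := Real.sin_pos_of_pos_of_lt_pi hψ10 (by linarith)
      -- f x₀ < 0
      have hcl0 := sin_closed_cal K Q ψ0 hQ p
      have hv0 : ((p:ℝ)+1)*ψ0 = Real.pi := by rw [hψ0def]; field_simp
      have hv0' : ((p:ℝ)+2)*ψ0 = Real.pi + ψ0 := by rw [hψ0def]; field_simp; ring
      rw [show ((p:ℝ)+1) = ((p:ℝ)+1) by rfl] at hcl0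
      push_cast at hcl0
      rw [hv0', hv0] at hcl0
      rw [Real.sin_pi] at hcl0
      have hsinpi : Real.sin (Real.pi + ψ0) = -Real.sin ψ0 := by
        rw [Real.sin_add, Real.sin_pi, Real.cos_pi]; ring
      rw [hsinpi] at hcl0
      have hQp : (0:ℝ) < Q^p := pow_pos hQ0 p
      have hfx0 : (calG K (p+1)).eval (2*Q*Real.cos ψ0) < 0 := by
        refine helper_neg hsψ0 hcl0 ?_
        have hm := mul_pos hQ0 hsψ0
        have : Q*(-Real.sin ψ0) + 0 < 0 := by linarith
        exact mul_neg_of_pos_of_neg hQp this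
      -- f x₁ > 0
      have hcl1 := sin_closed_cal K Q ψ1 hQ p
      have hv1 : ((p:ℝ)+2)*ψ1 = Real.pi := by rw [hψ1def]; field_simp
      push_cast at hcl1
      rw [hv1, Real.sin_pi] at hcl1
      have hargpos : 0 < ((p:ℝ)+1)*ψ1 := mul_pos hcp1 hψ10
      have harglt : ((p:ℝ)+1)*ψ1 < Real.pi := by
        rw [hψ1def]; exact mulpi_lt hcp2 (by linarith)
      have hs11 : 0 < Real.sin (((p:ℝ)+1)*ψ1) := Real.sin_pos_of_pos_of_lt_pi hargpos harglt
      have hfx1 : 0 < (calG K (p+1)).eval (2*Q*Real.cos ψ1) := by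
        refine helper_pos hsψ1 hcl1 ?_
        have : 0 < Q*0 + Real.sin (((p:ℝ)+1)*ψ1) := by simpa using hs11
        exact mul_pos hQp this
      -- IVT gives a root above x₀
      have hx01 : 2*Q*Real.cos ψ0 < 2*Q*Real.cos ψ1 := by
        have hc := Real.strictAntiOn_cos ⟨le_of_lt hψ10, le_of_lt (by linarith : ψ1 < Real.pi)⟩
          ⟨le_of_lt hψ00, le_of_lt hψ0pi⟩ hψ1ltψ0
        exact mul_lt_mul_of_pos_left hc (by positivity)
      have hcont : ContinuousOn (fun x => (calG K (p+1)).eval x)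
          (Set.Icc (2*Q*Real.cos ψ0) (2*Q*Real.cos ψ1)) :=
        (calG K (p+1)).continuous.continuousOn
      obtain ⟨z, hz, hz0⟩ := intermediate_value_Ioo (le_of_lt hx01) hcont ⟨hfx0, hfx1⟩
      have hzrA : z ≤ rA := hrA.2 hz0
      -- rA < θ ≤ lamB
      have hθlamB : θ ≤ 2*Q*Real.cos (Real.pi/((m:ℝ)+3)) := by rw [← hlamBeq]; exact h2
      have hcoslt : Real.cos ψ0 < Real.cos (Real.pi/((m:ℝ)+3)) := by
        have h2Qpos : (0:ℝ) < 2*Q := by positivity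
        have hlt : 2*Q*Real.cos ψ0 < 2*Q*Real.cos (Real.pi/((m:ℝ)+3)) := by
          linarith [hz.1]
        exact lt_of_mul_lt_mul_left hlt (le_of_lt h2Qpos)
      have hanglt : Real.pi/((m:ℝ)+3) < ψ0 := by
        by_contra hcon
        push_neg at hcon
        have hmem1 : ψ0 ∈ Set.Icc (0:ℝ) Real.pi := ⟨le_of_lt hψ00, le_of_lt hψ0pi⟩
        have hmem2 : Real.pi/((m:ℝ)+3) ∈ Set.Icc (0:ℝ) Real.pi := by
          constructor
          · positivity
          · exact le_trans (pidiv_le_pi (by linarith)) le_rfl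
        rcases lt_or_eq_of_le hcon with hlt | heq
        · have := Real.strictAntiOn_cos hmem1 hmem2 hlt
          linarith
        · rw [heq] at hcoslt; linarith
      rw [hψ0def] at hanglt
      have : (p:ℝ) + 1 < (m:ℝ) + 3 := pidiv_lt_rev hcp1 hcm3 hanglt
      have : p + 1 < m + 3 := by exact_mod_cast this
      omega
  -- the common c₁ equation
  have hFm2 : (Fpoly K (m+2)).eval θ
      = (Gpoly K (m+2)).eval θ - (Gpoly K m).eval θ := by
    rw [Fpoly_eq_G_sub_G K m]; simp
  have hc1e : c₁ * (Gpoly K m).eval θ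
      = (Gpoly K m).eval θ - (Gpoly K (m+2)).eval θ := by
    rw [hc₁, hFm2]; field_simp; ring
  have hc1s : c₁ * s1 = s1 - Q^2*s3 := by
    have h2' : c₁ * (Q^m * s1) = Q^m*s1 - Q^(m+2)*s3 := by
      linear_combination (-c₁)*hgm + hgm - hg2 + Real.sin φ * hc1e
    apply mul_left_cancel₀ (ne_of_gt hQm)
    linear_combination h2'
  have hc1K : c₁ * s1 = s1 - (K-1)*s3 := by rw [← hQ]; exact hc1s
  have hK1pos : (0:ℝ) < K - 1 := by linarith
  have hA : 0 < s1 - (K-1)*s3 := by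
    have h := mul_nonpos_of_nonneg_of_nonpos (le_of_lt hK1pos) hs3
    linarith
  have hc1pos : 0 < c₁ := helper_pos hs1 (by linear_combination hc1K) hA
  have hpowpos : (0:ℝ) < (K-1)^(m+1) := pow_pos hK1pos (m+1)
  rcases (by omega : m = p ∨ m + 1 = p) with rfl | rfl
  · -- Case B : t₂ = m + 3
    have hcalB : (calG K (m+1)).eval θ
        = (Gpoly K (m+1)).eval θ + (Gpoly K m).eval θ := by
      rw [calG_eq_G_add_G K m]; simp
    have hcalBpos : 0 < (calG K (m+1)).eval θ := by rw [hcalB]; linarith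
    have hc2e : c₂ * (calG K (m+1)).eval θ
        = (Gpoly K m).eval θ - (Gpoly K (m+2)).eval θ := by
      rw [hc₂, hFm2]; field_simp; ring
    have hclB : Real.sin φ * (calG K (m+1)).eval θ = Q^m*(Q*s2 + s1) := by
      rw [hcalB]
      linear_combination hg1 + hgm
    have hDp : 0 < Q*s2 + s1 := by positivity
    have hc2sB : c₂ * (Q*s2 + s1) = s1 - (K-1)*s3 := by
      have h2' : c₂ * (Q^m*(Q*s2+s1)) = Q^m*s1 - Q^(m+2)*s3 := by
        linear_combination (-c₂)*hclB + hgm - hg2 + Real.sin φ * hc2e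
      apply mul_left_cancel₀ (ne_of_gt hQm)
      rw [← hQ]
      linear_combination h2'
    have hc2Bpos : 0 < c₂ := helper_pos hDp (by linear_combination hc2sB) hA
    have hkB := keyB Q (Real.cos φ) s2 s3 s1 θ K (by linarith) hrel1 hθeq
    -- the bound difference
    have hM := MboundEq k m c₁
    have hN := NboundEq k (m+1) c₂
    rw [show m + 1 + 2 = m + 3 by omega] at hN
    have hNM : Nbound k (m+3) c₂ - Mbound k (m+4) c₁
        = (K-1)^(m+1) * (1 + K/c₂ - 2*K/c₁) := by
      rw [hM, hN, ← hKdef]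
      have hsum := sum_idB K m
      field_simp
      linear_combination (c₁*c₂) * hsum
    have hprodB : (c₁*c₂ + K*c₁ - 2*K*c₂)*(s1*(Q*s2+s1))
        = (s1-(K-1)*s3)*(Q*s2*(K-θ)) := by
      linear_combination (c₂*(Q*s2+s1) + K*(Q*s2+s1))*hc1K
        + ((s1-(K-1)*s3) - 2*K*s1)*hc2sB + (s1-(K-1)*s3)*hkB
    have hRHSpos : 0 < (s1-(K-1)*s3)*(Q*s2*(K-θ)) :=
      mul_pos hA (mul_pos (mul_pos hQ0 hs2) (by linarith))
    have hNumB : 0 < c₁*c₂ + K*c₁ - 2*K*c₂ :=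
      helper_pos (mul_pos hs1 hDp) (by linear_combination hprodB) hRHSpos
    have hU : (c₁*c₂) * (1 + K/c₂ - 2*K/c₁) = c₁*c₂ + K*c₁ - 2*K*c₂ := by
      field_simp
    have hUpos : 0 < 1 + K/c₂ - 2*K/c₁ :=
      helper_pos (mul_pos hc1pos hc2Bpos) hU hNumB
    have hdiff : 0 < Nbound k (m+3) c₂ - Mbound k (m+4) c₁ := by
      rw [hNM]; exact mul_pos hpowpos hUpos
    constructor
    · linarith
    · intro heq
      exfalso
      rw [heq] at hdiff
      linarith
  · -- Case A : t₂ = m + 4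
    rw [show m + 1 + 3 = m + 4 by omega] at ht₂ ⊢
    rw [show m + 1 + 2 = m + 3 by omega] at hrB
    rw [show m + 1 + 1 = m + 2 by omega] at hrA hc₂ hbigcalA
    rw [show m + 1 + 2 = m + 3 by omega] at hc₂ hbigcalB
    have hcalApos : 0 < (calG K (m+2)).eval θ :=
      pos_of_gt_greatest _ (2*Q) rA θ hbigcalA hrA h3
    have hcalA : (calG K (m+2)).eval θ
        = (Gpoly K (m+2)).eval θ + (Gpoly K (m+1)).eval θ := by
      have h := calG_eq_G_add_G K (m+1)
      rw [show m + 1 + 1 = m + 2 by omega] at h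
      rw [h]; simp
    have hclA : Real.sin φ * (calG K (m+2)).eval θ = Q^(m+1)*(Q*s3 + s2) := by
      rw [hcalA]
      linear_combination hg2 + hg1
    have hD : 0 < Q*s3 + s2 :=
      helper_pos hQm1 hclA.symm (mul_pos hsφ hcalApos)
    have hF3 : (Fpoly K (m+3)).eval θ
        = (Gpoly K (m+3)).eval θ - (Gpoly K (m+1)).eval θ := by
      have h := Fpoly_eq_G_sub_G K (m+1)
      rw [show m + 1 + 2 = m + 3 by omega] at h
      rw [h]; simp
    have hc2e : c₂ * (calG K (m+2)).eval θ
        = (Gpoly K (m+1)).eval θ - (Gpoly K (m+3)).eval θ := by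
      rw [hc₂, hF3]; field_simp; ring
    have hc2sA : c₂ * (Q*s3 + s2) = s2 - (K-1)*s4 := by
      have h2' : c₂ * (Q^(m+1)*(Q*s3+s2)) = Q^(m+1)*s2 - Q^(m+3)*s4 := by
        linear_combination (-c₂)*hclA + hg1 - hg3 + Real.sin φ * hc2e
      apply mul_left_cancel₀ (ne_of_gt hQm1)
      rw [← hQ]
      linear_combination h2'
    have hB : 0 < s2 - (K-1)*s4 := by
      have h := mul_neg_of_pos_of_neg hK1pos hs4
      linarith
    have hc2pos : 0 < c₂ := helper_pos hD (by linear_combination hc2sA) hB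
    have hkA := keyA Q (Real.cos φ) s2 s3 s1 s4 θ K (by linarith) hrel1 hrel4 hθeq
    have hbracket : 0 < K*(Q*s3+s2) + (K+θ)*s2 := by
      have h1 : 0 < K*(Q*s3+s2) := mul_pos (by linarith) hD
      have h2 : 0 < (K+θ)*s2 := mul_pos (by linarith) hs2
      linarith
    have hprodA : ((K+1)*c₁*c₂ + K*(K-1)*c₁ - 2*K*c₂)*(s1*(Q*s3+s2))
        = (-s3)*(K-1)*(K-θ)*(K*(Q*s3+s2) + (K+θ)*s2) := by
      linear_combination ((K+1)*c₂*(Q*s3+s2) + K*(K-1)*(Q*s3+s2))*hc1K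
        + ((K+1)*(s1-(K-1)*s3) - 2*K*s1)*hc2sA + hkA
    have hTnn : 0 ≤ (-s3)*(K-1)*(K-θ)*(K*(Q*s3+s2) + (K+θ)*s2) := by
      apply mul_nonneg
      apply mul_nonneg
      apply mul_nonneg
      · linarith
      · linarith
      · linarith
      · linarith
    have hNumA : 0 ≤ (K+1)*c₁*c₂ + K*(K-1)*c₁ - 2*K*c₂ :=
      helper_nonneg (mul_pos hs1 hD) (by linear_combination hprodA) hTnn
    have hEc : (c₁*c₂) * ((K+1) + K*(K-1)/c₂ - 2*K/c₁)
        = (K+1)*c₁*c₂ + K*(K-1)*c₁ - 2*K*c₂ := by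
      field_simp
    have hEnn : 0 ≤ (K+1) + K*(K-1)/c₂ - 2*K/c₁ :=
      helper_nonneg (mul_pos hc1pos hc2pos) hEc hNumA
    have hM := MboundEq k m c₁
    have hN := NboundEq k (m+2) c₂
    rw [show m + 2 + 2 = m + 4 by omega] at hN
    have hNM : Nbound k (m+4) c₂ - Mbound k (m+4) c₁
        = (K-1)^(m+1) * ((K+1) + K*(K-1)/c₂ - 2*K/c₁) := by
      rw [hM, hN, ← hKdef]
      have hsum := sum_idA K m
      field_simp
      linear_combination (c₁*c₂) * hsum
    constructor
    · have := mul_nonneg (le_of_lt hpowpos) hEnn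
      linarith
    · intro heq
      have hE0 : (K+1) + K*(K-1)/c₂ - 2*K/c₁ = 0 := by
        rw [heq] at hNM
        have h0 : (K-1)^(m+1) * ((K+1) + K*(K-1)/c₂ - 2*K/c₁) = 0 := by linarith
        rcases mul_eq_zero.mp h0 with h | h
        · exact absurd h (ne_of_gt hpowpos)
        · exact h
      have hNum0 : (K+1)*c₁*c₂ + K*(K-1)*c₁ - 2*K*c₂ = 0 := by
        rw [hE0, mul_zero] at hEc
        linarith
      have hT0 : (-s3)*(K-1)*(K-θ)*(K*(Q*s3+s2) + (K+θ)*s2) = 0 := by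
        rw [← hprodA, hNum0, zero_mul]
      have hs30 : s3 = 0 := by
        rcases mul_eq_zero.mp hT0 with h | h
        · rcases mul_eq_zero.mp h with h' | h'
          · rcases mul_eq_zero.mp h' with h'' | h''
            · linarith
            · exact absurd h'' (by linarith)
          · exact absurd h' (by linarith)
        · exact absurd h (ne_of_gt hbracket)
      have hφval : φ = Real.pi/((m:ℝ)+3) := hs3eq hs30
      have hθlam : θ = lamB := by
        rw [hlamBeq, hθeq, hφval]
      have hc11 : c₁ = 1 := by
        have h := hc1K
        rw [hs30, mul_zero, sub_zero] at h
        exact mul_right_cancel₀ (ne_of_gt hs1) (by linarith [h] : c₁ * s1 = 1 * s1)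
      have hc2K : c₂ = K := by
        have hs4' : s4 = -s2 := by rw [hrel4, hs30]; ring
        have h := hc2sA
        rw [hs30, hs4'] at h
        have h' : c₂ * s2 = K * s2 := by
          rw [mul_zero, zero_add] at h
          linarith [h]
        exact mul_right_cancel₀ (ne_of_gt hs2) h'
      exact ⟨rfl, hθlam, hc11, hc2K⟩
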